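/- Let m ≥ 2 and let (a,b) ∈ F_{2^m} × F_{2^m} with (a,b) ≠ (0,0). Then the weight wt(c(a,b)) = #{(x,y) ∈ D_1 : Tr(axy + bx) = 1} satisfies: wt(c(a,b)) = 2^{2m−2} if a = 0, b ≠ 0 and Tr(b) = 0, or if a ∉ Υ1 ∪ {0}, or if a ∈ Υ1, b ≠ 0 and Tr(ab) = 1; otherwise wt(c(a,b)) ∈ {2^{m−1}(2^{m−1} − 1), 2^{m−1}(2^{m−1} + 1)}. -/

import Mathlib

attribute [local instance] Classical.propDecidable

noncomputable instance (m : ℕ) : Fintype (GaloisField 2 m) := Fintype.ofFinite _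

noncomputable def Tr (m : ℕ) (x : GaloisField 2 m) : ZMod 2 :=
  Algebra.trace (ZMod 2) (GaloisField 2 m) x

open Finset

lemma Tr_add (m : ℕ) (x y : GaloisField 2 m) : Tr m (x + y) = Tr m x + Tr m y :=
  map_add (Algebra.trace (ZMod 2) (GaloisField 2 m)) x y

lemma Tr_zero (m : ℕ) : Tr m 0 = 0 :=
  map_zero (Algebra.trace (ZMod 2) (GaloisField 2 m))

lemma exists_Tr_one (m : ℕ) : ∃ z : GaloisField 2 m, Tr m z = 1 := by
  have h := Algebra.trace_ne_zero (ZMod 2) (GaloisField 2 m)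
  have : ∃ z, Tr m z ≠ 0 := by
    by_contra h'
    push_neg at h'
    exact h (LinearMap.ext fun z => h' z)
  obtain ⟨z, hz⟩ := this
  exact ⟨z, by revert hz; generalize Tr m z = s; revert s; decide⟩

lemma card_GF (m : ℕ) (hm : m ≠ 0) : Fintype.card (GaloisField 2 m) = 2 ^ m := by
  rw [← Nat.card_eq_fintype_card]; exact GaloisField.card 2 m hm

lemma count_tr (m : ℕ) (hm : 2 ≤ m) (u : GaloisField 2 m) (hu : u ≠ 0) (t : ZMod 2) :
    (Finset.univ.filter fun y : GaloisField 2 m => Tr m (y * u) = t).card = 2 ^ (m - 1) := by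
  obtain ⟨z, hz⟩ := exists_Tr_one m
  have hchar : ∀ w : GaloisField 2 m, w + w = 0 := fun w => CharTwo.add_self_eq_zero w
  have hkey : ∀ s : ZMod 2,
      (Finset.univ.filter fun y : GaloisField 2 m => Tr m (y * u) = s).card
        = (Finset.univ.filter fun y : GaloisField 2 m => Tr m (y * u) = s + 1).card := by
    intro s
    apply Finset.card_bij' (fun y _ => y + z * u⁻¹) (fun y _ => y + z * u⁻¹)
    · intro y hy
      simp only [mem_filter, mem_univ, true_and] at hy ⊢
      rw [add_mul, Tr_add, hy]
      congr 1
      rw [mul_assoc, inv_mul_cancel₀ hu, mul_one, hz]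
    · intro y hy
      simp only [mem_filter, mem_univ, true_and] at hy ⊢
      rw [add_mul, Tr_add, hy]
      have : Tr m (z * u⁻¹ * u) = 1 := by rw [mul_assoc, inv_mul_cancel₀ hu, mul_one, hz]
      rw [this]
      exact (by decide : ∀ s : ZMod 2, s + 1 + 1 = s) s
    · intro y _; rw [add_assoc, hchar, add_zero]
    · intro y _; rw [add_assoc, hchar, add_zero]
  have hsplit : (Finset.univ.filter fun y : GaloisField 2 m => Tr m (y * u) = 0).card
      + (Finset.univ.filter fun y : GaloisField 2 m => Tr m (y * u) = 1).card = 2 ^ m := by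
    have h1 := Finset.card_filter_add_card_filter_not
        (s := (Finset.univ : Finset (GaloisField 2 m)))
        (p := fun y : GaloisField 2 m => Tr m (y * u) = 0)
    have h2 : (Finset.univ.filter fun y : GaloisField 2 m => ¬ Tr m (y * u) = 0)
        = Finset.univ.filter fun y : GaloisField 2 m => Tr m (y * u) = 1 := by
      apply Finset.filter_congr
      intro y _
      generalize Tr m (y * u) = s
      revert s; decide
    rw [h2] at h1
    rw [h1, Finset.card_univ, card_GF m (by omega)]
  have h01 := hkey 0
  simp only [zero_add] at h01
  have hpow : 2 ^ m = 2 ^ (m - 1) + 2 ^ (m - 1) := by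
    have h3 : 2 ^ (m - 1) * 2 = 2 ^ m := by
      rw [← pow_succ]; congr 1; omega
    omega
  have ht : t = 0 ∨ t = 1 := by revert t; decide
  rcases ht with rfl | rfl <;> omega

lemma char2_add_eq_zero (m : ℕ) (x y : GaloisField 2 m) (h : x + y = 0) : x = y := by
  have := CharTwo.add_eq_iff_eq_add (a := x) (b := y) (c := 0)
  rw [this] at h; rwa [zero_add] at h

lemma split01 (m : ℕ) (S : Finset (GaloisField 2 m)) (f : GaloisField 2 m → ZMod 2) :
    (S.filter fun y => f y = 0).card + (S.filter fun y => f y = 1).card = S.card := by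
  have h1 := Finset.card_filter_add_card_filter_not (s := S) (p := fun y => f y = 0)
  have h2 : S.filter (fun y => ¬ f y = 0) = S.filter (fun y => f y = 1) := by
    apply Finset.filter_congr; intro y _; generalize f y = s; revert s; decide
  rw [h2] at h1; exact h1

lemma count_tr2 (m : ℕ) (hm : 2 ≤ m) (u v : GaloisField 2 m) (hu : u ≠ 0) (hv : v ≠ 0)
    (huv : u ≠ v) (s t : ZMod 2) :
    (Finset.univ.filter fun y : GaloisField 2 m =>
      Tr m (y * u) = s ∧ Tr m (y * v) = t).card = 2 ^ (m - 2) := by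
  have hpow : 2 ^ (m - 2) * 2 = 2 ^ (m - 1) := by rw [← pow_succ]; congr 1; omega
  set c : ZMod 2 → ZMod 2 → ℕ := fun s t =>
    (Finset.univ.filter fun y : GaloisField 2 m =>
      Tr m (y * u) = s ∧ Tr m (y * v) = t).card with hcdef
  show c s t = 2 ^ (m - 2)
  have hrow : ∀ s' : ZMod 2, c s' 0 + c s' 1 = 2 ^ (m - 1) := by
    intro s'
    have e : ∀ t' : ZMod 2, c s' t' =
        ((Finset.univ.filter fun y : GaloisField 2 m => Tr m (y * u) = s').filter
          fun y => Tr m (y * v) = t').card := by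
      intro t'; rw [hcdef]; simp only [Finset.filter_filter]
    rw [e 0, e 1, split01 m _ (fun y => Tr m (y * v)), count_tr m hm u hu s']
  have hcol : ∀ t' : ZMod 2, c 0 t' + c 1 t' = 2 ^ (m - 1) := by
    intro t'
    have e : ∀ s' : ZMod 2, c s' t' =
        ((Finset.univ.filter fun y : GaloisField 2 m => Tr m (y * v) = t').filter
          fun y => Tr m (y * u) = s').card := by
      intro s'; rw [hcdef]; simp only [Finset.filter_filter]
      congr 1
      apply Finset.filter_congr; intro y _; exact and_comm
    rw [e 0, e 1, split01 m _ (fun y => Tr m (y * u)), count_tr m hm v hv t']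
  have hdiag : c 0 0 + c 1 1 = 2 ^ (m - 1) := by
    have huv0 : u + v ≠ 0 := fun h => huv (char2_add_eq_zero m u v h)
    have key := count_tr m hm (u + v) huv0 0
    have e : (Finset.univ.filter fun y : GaloisField 2 m => Tr m (y * (u + v)) = 0)
        = (Finset.univ.filter fun y : GaloisField 2 m =>
            (Tr m (y * u) = 0 ∧ Tr m (y * v) = 0) ∨ (Tr m (y * u) = 1 ∧ Tr m (y * v) = 1)) := by
      apply Finset.filter_congr; intro y _
      rw [mul_add, Tr_add]
      generalize Tr m (y * u) = p; generalize Tr m (y * v) = q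
      revert p q; decide
    rw [e, Finset.filter_or, Finset.card_union_of_disjoint] at key
    · exact key
    · rw [Finset.disjoint_left]
      intro x hx hx'
      simp only [Finset.mem_filter] at hx hx'
      have := hx.2.1; have := hx'.2.1
      simp_all
  have h00 := hrow 0; have h11 := hrow 1
  have h0 := hcol 0; have h1 := hcol 1
  have hst : (s = 0 ∨ s = 1) ∧ (t = 0 ∨ t = 1) := by
    constructor <;> [revert s; revert t] <;> decide
  obtain ⟨hs | hs, ht | ht⟩ := hst <;> subst hs <;> subst ht <;> omega

def sgn : ZMod 2 → ℤ := fun t => if t = 0 then 1 else -1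

def Ups1 (m : ℕ) : Set (GaloisField 2 m) :=
  {u | ∃ r : GaloisField 2 m, r ≠ 0 ∧ r ≠ 1 ∧ u = r + r⁻¹}

section Main

variable (m : ℕ)

-- x ≠ 1 implies x^2 + 1 ≠ 0
lemma sq_add_one_ne (x : GaloisField 2 m) (hx : x ≠ 1) : x ^ 2 + 1 ≠ 0 := by
  intro h
  have h2 : (2 : GaloisField 2 m) = 0 := CharTwo.two_eq_zero
  have e : (x + 1) ^ 2 = x ^ 2 + 1 := by
    have : (x + 1) ^ 2 = x ^ 2 + 2 * x + 1 := by ring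
    rw [this, h2]; ring
  rw [← e] at h
  have := pow_eq_zero_iff (n := 2) (by norm_num) |>.mp h
  exact hx (char2_add_eq_zero m x 1 this)

-- a ∈ Ups1 is nonzero
lemma Ups1_ne_zero (a : GaloisField 2 m) (ha : a ∈ Ups1 m) : a ≠ 0 := by
  obtain ⟨r, hr0, hr1, rfl⟩ := ha
  intro h
  have : r = r⁻¹ := char2_add_eq_zero m r r⁻¹ h
  have hr2 : r * r = 1 := by
    conv_lhs => lhs; rw [this]
    exact inv_mul_cancel₀ hr0
  have : (r + 1) ^ 2 = 0 := by
    have h2 : (2 : GaloisField 2 m) = 0 := CharTwo.two_eq_zero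
    have : (r + 1) ^ 2 = r * r + 2 * r + 1 := by ring
    rw [this, h2, hr2]
    rw [show (1 : GaloisField 2 m) + 0 * r + 1 = 2 from by ring, h2]
  have := pow_eq_zero_iff (n := 2) (by norm_num) |>.mp this
  exact hr1 (char2_add_eq_zero m r 1 this)

end Main

lemma mul_self_one (m : ℕ) (r : GaloisField 2 m) (h : r * r = 1) : r = 1 := by
  have h2 : (2 : GaloisField 2 m) = 0 := CharTwo.two_eq_zero
  have e : (r + 1) ^ 2 = r * r + 2 * r + 1 := by ring
  rw [h, h2] at e
  have e2 : (r + 1) ^ 2 = 0 := by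
    rw [e, show (1:GaloisField 2 m) + 0 * r + 1 = 2 by ring]; exact h2
  have := pow_eq_zero_iff (n := 2) (by norm_num) |>.mp e2
  exact char2_add_eq_zero m r 1 this

lemma zero_not_Ups1 (m : ℕ) : (0 : GaloisField 2 m) ∉ Ups1 m :=
  fun h => Ups1_ne_zero m 0 h rfl

theorem stmt10 (m : ℕ) (hm : 2 ≤ m) (a b : GaloisField 2 m) (hab : (a, b) ≠ (0, 0)) :
    let wt : ℕ := (Finset.univ.filter (fun p : GaloisField 2 m × GaloisField 2 m =>
      p.1 ≠ 0 ∧ Tr m (p.2 * p.1 ^ 2 + p.2) = 0 ∧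
        Tr m (a * p.1 * p.2 + b * p.1) = 1)).card
    ((a = 0 ∧ b ≠ 0 ∧ Tr m b = 0) ∨ (a ∉ Ups1 m ∧ a ≠ 0) ∨
        (a ∈ Ups1 m ∧ b ≠ 0 ∧ Tr m (a * b) = 1) →
      wt = 2 ^ (2 * m - 2)) ∧
    (¬((a = 0 ∧ b ≠ 0 ∧ Tr m b = 0) ∨ (a ∉ Ups1 m ∧ a ≠ 0) ∨
        (a ∈ Ups1 m ∧ b ≠ 0 ∧ Tr m (a * b) = 1)) →
      wt = 2 ^ (m - 1) * (2 ^ (m - 1) - 1) ∨ wt = 2 ^ (m - 1) * (2 ^ (m - 1) + 1)) := by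
  intro wt
  have hm0 : m ≠ 0 := by omega
  -- ZMod 2 helpers
  have hz10 : ∀ s : ZMod 2, s ≠ 1 → s = 0 := by decide
  have hz01 : ∀ s : ZMod 2, s ≠ 0 → s = 1 := by decide
  have hz11 : (1 : ZMod 2) + 1 = 0 := by decide
  have hzz : ∀ s t : ZMod 2, (s + t = 1) ↔ (s = 1 + t) := by decide
  -- power facts
  have hm1 : (2:ℕ) ^ (m - 2) * 2 = 2 ^ (m - 1) := by rw [← pow_succ]; congr 1; omega
  have hq : (2:ℕ) ^ (m - 2) * 4 = 2 ^ m := by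
    rw [show (4:ℕ) = 2 ^ 2 by norm_num, ← pow_add]; congr 1; omega
  have htgt : (2:ℕ) ^ (2 * m - 2) = 2 ^ (m - 1) * 2 ^ (m - 1) := by
    rw [← pow_add]; congr 1; omega
  set P : ℕ := 2 ^ (m - 2) with hPdef
  set A : ℕ := 2 ^ (m - 1) with hAdef
  -- the inner count function
  set N : GaloisField 2 m → ℕ := fun x => (Finset.univ.filter fun y : GaloisField 2 m =>
      x ≠ 0 ∧ Tr m (y * x ^ 2 + y) = 0 ∧ Tr m (a * x * y + b * x) = 1).card with hNdef
  have hwt : wt = ∑ x : GaloisField 2 m, N x := by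
    show (Finset.univ.filter (fun p : GaloisField 2 m × GaloisField 2 m =>
      p.1 ≠ 0 ∧ Tr m (p.2 * p.1 ^ 2 + p.2) = 0 ∧
        Tr m (a * p.1 * p.2 + b * p.1) = 1)).card = _
    rw [Finset.card_filter, Fintype.sum_prod_type]
    refine Finset.sum_congr rfl fun x _ => ?_
    simp only [hNdef, Finset.card_filter]
  -- canonical form of N
  have hNx : ∀ x : GaloisField 2 m, x ≠ 0 →
      N x = (Finset.univ.filter fun y : GaloisField 2 m =>
        Tr m (y * (x ^ 2 + 1)) = 0 ∧ Tr m (y * (a * x)) = 1 + Tr m (b * x)).card := by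
    intro x hx
    simp only [hNdef]
    congr 1
    apply Finset.filter_congr
    intro y _
    have e1 : y * x ^ 2 + y = y * (x ^ 2 + 1) := by ring
    have e2 : a * x * y + b * x = y * (a * x) + b * x := by ring
    rw [e1, e2, Tr_add]
    constructor
    · rintro ⟨-, h1, h2⟩
      exact ⟨h1, (hzz _ _).mp h2⟩
    · rintro ⟨h1, h2⟩
      exact ⟨hx, h1, (hzz _ _).mpr h2⟩
  have hN0 : N 0 = 0 := by
    simp only [hNdef]
    rw [Finset.filter_false_of_mem (fun y _ h => h.1 rfl), Finset.card_empty]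
  have hN1a : a ≠ 0 → N 1 = A := by
    intro ha
    rw [hNx 1 one_ne_zero]
    have e0 : (1 : GaloisField 2 m) ^ 2 + 1 = 0 := by
      rw [one_pow]; exact CharTwo.add_self_eq_zero 1
    have e : (Finset.univ.filter fun y : GaloisField 2 m =>
        Tr m (y * ((1:GaloisField 2 m) ^ 2 + 1)) = 0 ∧ Tr m (y * (a * 1)) = 1 + Tr m (b * 1))
        = Finset.univ.filter fun y : GaloisField 2 m => Tr m (y * a) = 1 + Tr m b := by
      apply Finset.filter_congr
      intro y _
      rw [e0, mul_zero, Tr_zero, mul_one, mul_one]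
      simp
    rw [e, count_tr m hm a ha]
  -- splitting off {0, 1}
  have h01ne : (0 : GaloisField 2 m) ≠ 1 := zero_ne_one
  have hsub2 : ({0, 1} : Finset (GaloisField 2 m)) ⊆ Finset.univ := Finset.subset_univ _
  have hsplit2 : ∑ x ∈ Finset.univ \ ({0,1} : Finset (GaloisField 2 m)), N x + (N 0 + N 1)
      = ∑ x : GaloisField 2 m, N x := by
    rw [← Finset.sum_pair h01ne]
    exact Finset.sum_sdiff hsub2
  have hcard2 : (Finset.univ \ ({0,1} : Finset (GaloisField 2 m))).card + 2 = 2 ^ m := by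
    have := Finset.card_sdiff_add_card_eq_card hsub2
    rwa [Finset.card_pair h01ne, Finset.card_univ, card_GF m hm0] at this
  have hmem2 : ∀ x : GaloisField 2 m, x ∈ Finset.univ \ ({0,1} : Finset (GaloisField 2 m)) →
      x ≠ 0 ∧ x ≠ 1 := by
    intro x hx
    simp only [Finset.mem_sdiff, Finset.mem_insert, Finset.mem_singleton] at hx
    exact ⟨fun h => hx.2 (Or.inl h), fun h => hx.2 (Or.inr h)⟩
  have hP1 : 1 ≤ P := Nat.one_le_two_pow
  have hvals : (((a = 0 ∧ b ≠ 0 ∧ Tr m b = 0) ∨ (a ∉ Ups1 m ∧ a ≠ 0) ∨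
        (a ∈ Ups1 m ∧ b ≠ 0 ∧ Tr m (a * b) = 1)) ∧ wt = 2 ^ (2 * m - 2)) ∨
      (¬((a = 0 ∧ b ≠ 0 ∧ Tr m b = 0) ∨ (a ∉ Ups1 m ∧ a ≠ 0) ∨
        (a ∈ Ups1 m ∧ b ≠ 0 ∧ Tr m (a * b) = 1)) ∧
        (wt = A * (A - 1) ∨ wt = A * (A + 1))) := by
    by_cases ha0 : a = 0
    · subst ha0
      have hb : b ≠ 0 := by
        intro h; subst h; exact hab rfl
      have hrest : ∀ x ∈ Finset.univ \ ({0,1} : Finset (GaloisField 2 m)),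
          N x = if Tr m (b * x) = 1 then A else 0 := by
        intro x hx
        obtain ⟨hx0, hx1⟩ := hmem2 x hx
        rw [hNx x hx0]
        have hu : x ^ 2 + 1 ≠ 0 := sq_add_one_ne m x hx1
        by_cases h : Tr m (b * x) = 1
        · rw [if_pos h, hAdef, ← count_tr m hm (x ^ 2 + 1) hu 0]
          congr 1
          apply Finset.filter_congr
          intro y _
          rw [zero_mul, mul_zero, Tr_zero, h, hz11]
          simp
        · rw [if_neg h]
          rw [Finset.filter_false_of_mem, Finset.card_empty]
          rintro y - ⟨-, h2⟩
          rw [zero_mul, mul_zero, Tr_zero, hz10 _ h] at h2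
          exact absurd h2 (by decide)
      set S := Finset.univ \ ({0,1} : Finset (GaloisField 2 m)) with hS
      set cf := (S.filter fun x => Tr m (b * x) = 1).card with hcf
      have hsumrest : ∑ x ∈ S, N x = cf * A := by
        rw [Finset.sum_congr rfl hrest, ← Finset.sum_filter, Finset.sum_const, smul_eq_mul]
      have hunivf : (Finset.univ.filter fun x : GaloisField 2 m => Tr m (b * x) = 1).card
          = A := by
        rw [show (Finset.univ.filter fun x : GaloisField 2 m => Tr m (b * x) = 1)
            = Finset.univ.filter fun x : GaloisField 2 m => Tr m (x * b) = 1 from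
          Finset.filter_congr fun x _ => by rw [mul_comm]]
        exact count_tr m hm b hb 1
      have hdecomp : cf + (({0,1} : Finset (GaloisField 2 m)).filter
          fun x => Tr m (b * x) = 1).card = A := by
        rw [← hunivf]
        conv_rhs => rw [← Finset.sdiff_union_of_subset hsub2]
        rw [Finset.filter_union,
          Finset.card_union_of_disjoint (Finset.disjoint_filter_filter Finset.sdiff_disjoint)]
      by_cases htb : Tr m b = 1
      · have hN1 : N 1 = 2 ^ m := by
          rw [hNx 1 one_ne_zero]
          rw [Finset.filter_true_of_mem, Finset.card_univ, card_GF m hm0]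
          intro y _
          refine ⟨?_, ?_⟩
          · rw [show (1:GaloisField 2 m) ^ 2 + 1 = 0 from by
              rw [one_pow]; exact CharTwo.add_self_eq_zero 1, mul_zero, Tr_zero]
          · rw [zero_mul, mul_zero, Tr_zero, mul_one, htb, hz11]
        have hcf1 : ({0,1} : Finset (GaloisField 2 m)).filter (fun x => Tr m (b * x) = 1)
            = {1} := by
          ext x
          simp only [Finset.mem_filter, Finset.mem_insert, Finset.mem_singleton]
          constructor
          · rintro ⟨h0 | h1, hP⟩
            · subst h0; rw [mul_zero, Tr_zero] at hP; exact absurd hP (by decide)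
            · exact h1
          · rintro rfl
            exact ⟨Or.inr rfl, by rwa [mul_one]⟩
        have hcfv : cf + 1 = A := by
          rw [hcf1, Finset.card_singleton] at hdecomp; exact hdecomp
        have hwtv : wt = A * (A + 1) := by
          rw [hwt, ← hsplit2, hsumrest, hN0, hN1]
          have h2m : (2:ℕ) ^ m = A * 2 := by rw [← hq, ← hm1]; ring
          rw [h2m]
          calc cf * A + (0 + A * 2) = (cf + 1) * A + A := by ring
            _ = A * A + A := by rw [hcfv]
            _ = A * (A + 1) := by ring
        refine Or.inr ⟨?_, Or.inr hwtv⟩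
        rintro (⟨-, -, h⟩ | ⟨-, h⟩ | ⟨h, -⟩)
        · rw [htb] at h; exact absurd h (by decide)
        · exact h rfl
        · exact zero_not_Ups1 m h
      · have htb0 : Tr m b = 0 := hz10 _ htb
        have hN1 : N 1 = 0 := by
          rw [hNx 1 one_ne_zero, Finset.filter_false_of_mem, Finset.card_empty]
          rintro y - ⟨-, h2⟩
          rw [zero_mul, mul_zero, Tr_zero, mul_one, htb0] at h2
          exact absurd h2 (by decide)
        have hcf0 : ({0,1} : Finset (GaloisField 2 m)).filter (fun x => Tr m (b * x) = 1)
            = ∅ := by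
          apply Finset.filter_false_of_mem
          intro x hx
          rcases Finset.mem_insert.mp hx with rfl | hx1
          · rw [mul_zero, Tr_zero]; exact by decide
          · rw [Finset.mem_singleton.mp hx1, mul_one, htb0]; exact by decide
        have hcfv : cf = A := by
          rw [hcf0, Finset.card_empty] at hdecomp; omega
        have hwtv : wt = 2 ^ (2 * m - 2) := by
          rw [hwt, ← hsplit2, hsumrest, hN0, hN1, htgt, hcfv]
          ring
        exact Or.inl ⟨Or.inl ⟨rfl, hb, htb0⟩, hwtv⟩
    · by_cases haU : a ∈ Ups1 m
      · obtain ⟨r, hr0, hr1, ha⟩ := haU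
        have haU' : a ∈ Ups1 m := ⟨r, hr0, hr1, ha⟩
        have hr'0 : r⁻¹ ≠ 0 := inv_ne_zero hr0
        have hr'1 : r⁻¹ ≠ 1 := by
          intro h; apply hr1
          have h2 := congrArg (r * ·) h
          rw [mul_inv_cancel₀ hr0, mul_one] at h2
          exact h2.symm
        have hrr : r ≠ r⁻¹ := by
          intro h
          apply hr1
          apply mul_self_one m r
          conv_lhs => rhs; rw [h]
          exact mul_inv_cancel₀ hr0
        have hrm : r ∉ ({r⁻¹} : Finset (GaloisField 2 m)) := by
          rw [Finset.mem_singleton]; exact hrr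
        have h1m : (1:GaloisField 2 m) ∉ insert r ({r⁻¹} : Finset (GaloisField 2 m)) := by
          simp only [Finset.mem_insert, Finset.mem_singleton]
          push_neg
          exact ⟨fun h => hr1 h.symm, fun h => hr'1 h.symm⟩
        have h0m : (0:GaloisField 2 m)
            ∉ insert 1 (insert r ({r⁻¹} : Finset (GaloisField 2 m))) := by
          simp only [Finset.mem_insert, Finset.mem_singleton]
          push_neg
          exact ⟨fun h => h01ne h, fun h => hr0 h.symm, fun h => hr'0 h.symm⟩
        set s4 : Finset (GaloisField 2 m) := insert 0 (insert 1 (insert r {r⁻¹})) with hs4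
        have hsub4 : s4 ⊆ Finset.univ := Finset.subset_univ _
        have hcs4 : s4.card = 4 := by
          rw [hs4, Finset.card_insert_of_notMem h0m, Finset.card_insert_of_notMem h1m,
            Finset.card_insert_of_notMem hrm, Finset.card_singleton]
        have hcard4 : (Finset.univ \ s4).card + 4 = 2 ^ m := by
          have h := Finset.card_sdiff_add_card_eq_card hsub4
          rw [hcs4, Finset.card_univ, card_GF m hm0] at h
          exact h
        have hsplit4 : ∑ x ∈ Finset.univ \ s4, N x + (N 0 + (N 1 + (N r + N r⁻¹)))
            = ∑ x : GaloisField 2 m, N x := by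
          rw [← Finset.sum_sdiff hsub4]
          congr 1
          rw [hs4, Finset.sum_insert h0m, Finset.sum_insert h1m, Finset.sum_insert hrm,
            Finset.sum_singleton]
        have hrr1 : r * r⁻¹ = 1 := mul_inv_cancel₀ hr0
        have hvu_r : a * r = r ^ 2 + 1 := by
          have e : (r + r⁻¹) * r = r ^ 2 + r⁻¹ * r := by ring
          rw [inv_mul_cancel₀ hr0] at e
          rw [ha]; exact e
        have hvu_r' : a * r⁻¹ = (r⁻¹) ^ 2 + 1 := by
          have e : (r + r⁻¹) * r⁻¹ = (r⁻¹) ^ 2 + r * r⁻¹ := by ring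
          rw [hrr1] at e
          rw [ha]; exact e
        have hNr_gen : ∀ s : GaloisField 2 m, s ≠ 0 → s ≠ 1 → a * s = s ^ 2 + 1 →
            N s = if Tr m (b * s) = 1 then A else 0 := by
          intro s hs0 hs1 hvu
          rw [hNx s hs0]
          by_cases h : Tr m (b * s) = 1
          · rw [if_pos h, hAdef, ← count_tr m hm (s ^ 2 + 1) (sq_add_one_ne m s hs1) 0]
            congr 1
            apply Finset.filter_congr
            intro y _
            rw [hvu, h, hz11]
            simp
          · rw [if_neg h, Finset.filter_false_of_mem, Finset.card_empty]
            rintro y - ⟨h1, h2⟩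
            rw [hvu, hz10 _ h, h1] at h2
            exact absurd h2 (by decide)
        have hNr := hNr_gen r hr0 hr1 hvu_r
        have hNr' := hNr_gen r⁻¹ hr'0 hr'1 hvu_r'
        have hrest : ∀ x ∈ Finset.univ \ s4, N x = P := by
          intro x hx
          rw [Finset.mem_sdiff, hs4] at hx
          obtain ⟨-, hx4⟩ := hx
          simp only [Finset.mem_insert, Finset.mem_singleton] at hx4
          push_neg at hx4
          obtain ⟨hx0, hx1, hxr, hxr'⟩ := hx4
          rw [hNx x hx0]
          have huv : x ^ 2 + 1 ≠ a * x := by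
            intro h
            have e : (x + r) * (x + r⁻¹) = x ^ 2 + (r + r⁻¹) * x + r * r⁻¹ := by ring
            rw [hrr1, ← ha] at e
            have e2 : x ^ 2 + a * x + 1 = (x ^ 2 + 1) + a * x := by ring
            have e3 : (x + r) * (x + r⁻¹) = 0 := by
              rw [e, e2, h]
              exact CharTwo.add_self_eq_zero _
            rcases mul_eq_zero.mp e3 with h4 | h4
            · exact hxr (char2_add_eq_zero m x r h4)
            · exact hxr' (char2_add_eq_zero m x r⁻¹ h4)
          exact count_tr2 m hm _ _ (sq_add_one_ne m x hx1) (mul_ne_zero ha0 hx0) huv 0 _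
        have hsumrest : ∑ x ∈ Finset.univ \ s4, N x = (Finset.univ \ s4).card * P := by
          rw [Finset.sum_congr rfl hrest, Finset.sum_const, smul_eq_mul]
        have hTrab : Tr m (b * r) + Tr m (b * r⁻¹) = Tr m (a * b) := by
          rw [← Tr_add]
          congr 1
          rw [ha]; ring
        set c := (Finset.univ \ s4).card with hcdef2
        have hc4 : c + 4 = P * 4 := by rw [hq]; exact hcard4
        have hN1 := hN1a ha0
        obtain ⟨p1, hp1⟩ : ∃ p1, P = p1 + 1 := ⟨P - 1, by omega⟩
        have hcP : c = 4 * p1 := by omega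
        have hAP : A = 2 * p1 + 2 := by rw [← hm1, hp1]; ring
        by_cases htab : Tr m (a * b) = 1
        · have hb : b ≠ 0 := by
            intro hb0; rw [hb0, mul_zero, Tr_zero] at htab; exact absurd htab (by decide)
          have hsum1 : N r + N r⁻¹ = A := by
            rw [hNr, hNr']
            rw [← hTrab] at htab
            rcases (by decide : ∀ s t : ZMod 2, s + t = 1 →
                (s = 1 ∧ ¬ t = 1) ∨ (¬ s = 1 ∧ t = 1)) _ _ htab with ⟨h1, h2⟩ | ⟨h1, h2⟩
            · rw [if_pos h1, if_neg h2, add_zero]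
            · rw [if_neg h1, if_pos h2, zero_add]
          have hwtv : wt = 2 ^ (2 * m - 2) := by
            rw [hwt, ← hsplit4, hsumrest, hN0, hN1, hsum1, htgt, hcP, hAP, hp1]
            ring
          exact Or.inl ⟨Or.inr (Or.inr ⟨haU', hb, htab⟩), hwtv⟩
        · have htab0 : Tr m (a * b) = 0 := hz10 _ htab
          have hnc : ¬((a = 0 ∧ b ≠ 0 ∧ Tr m b = 0) ∨ (a ∉ Ups1 m ∧ a ≠ 0) ∨
              (a ∈ Ups1 m ∧ b ≠ 0 ∧ Tr m (a * b) = 1)) := by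
            rintro (⟨h, -, -⟩ | ⟨h, -⟩ | ⟨-, -, h⟩)
            · exact ha0 h
            · exact h haU'
            · exact htab h
          rw [← hTrab] at htab0
          rcases (by decide : ∀ s t : ZMod 2, s + t = 0 →
              (¬ s = 1 ∧ ¬ t = 1) ∨ (s = 1 ∧ t = 1)) _ _ htab0 with ⟨h1, h2⟩ | ⟨h1, h2⟩
          · refine Or.inr ⟨hnc, Or.inl ?_⟩
            rw [hwt, ← hsplit4, hsumrest, hN0, hN1, hNr, hNr', if_neg h1, if_neg h2,
              hcP, hAP, hp1]
            rw [show 2 * p1 + 2 - 1 = 2 * p1 + 1 from by omega]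
            ring
          · refine Or.inr ⟨hnc, Or.inr ?_⟩
            rw [hwt, ← hsplit4, hsumrest, hN0, hN1, hNr, hNr', if_pos h1, if_pos h2,
              hcP, hAP, hp1]
            ring
      · have hrest : ∀ x ∈ Finset.univ \ ({0,1} : Finset (GaloisField 2 m)), N x = P := by
          intro x hx
          obtain ⟨hx0, hx1⟩ := hmem2 x hx
          rw [hNx x hx0]
          have huv : x ^ 2 + 1 ≠ a * x := by
            intro h
            apply haU
            refine ⟨x, hx0, hx1, ?_⟩
            have h1 := congrArg (· * x⁻¹) h
            rw [mul_assoc, mul_inv_cancel₀ hx0, mul_one] at h1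
            rw [← h1]
            field_simp
          exact count_tr2 m hm _ _ (sq_add_one_ne m x hx1) (mul_ne_zero ha0 hx0) huv 0 _
        have hsumrest : ∑ x ∈ Finset.univ \ ({0,1} : Finset (GaloisField 2 m)), N x
            = (Finset.univ \ ({0,1} : Finset (GaloisField 2 m))).card * P := by
          rw [Finset.sum_congr rfl hrest, Finset.sum_const, smul_eq_mul]
        have hwtv : wt = 2 ^ (2 * m - 2) := by
          rw [hwt, ← hsplit2, hsumrest, hN0, hN1a ha0, htgt]
          set c := (Finset.univ \ ({0,1} : Finset (GaloisField 2 m))).card with hcdef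
          have h4 : c + 2 = P * 4 := by rw [hq]; exact hcard2
          calc c * P + (0 + A) = (c + 2) * P := by rw [← hm1]; ring
            _ = (P * 4) * P := by rw [h4]
            _ = A * A := by rw [← hm1]; ring
        exact Or.inl ⟨Or.inr (Or.inl ⟨haU, ha0⟩), hwtv⟩
  obtain ⟨hc, hw⟩ | ⟨hc, hw⟩ := hvals
  · exact ⟨fun _ => hw, fun h => absurd hc h⟩
  · exact ⟨fun h => absurd h hc, fun _ => hw⟩
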